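/- For n ≥ 2, let X have x₁ = ⋯ = x_{n−1} = 1 and xₙ = 0. Then EX − ΠX = (n−1)/n = n·Var(X^{1/2}); i.e., the upper bound EX − ΠX ≤ n·Var(X^{1/2}) holds with equality. -/

import Mathlib

theorem upper_bound_sharp (n : ℕ) (hn : 2 ≤ n)
    (x : Fin n → ℝ) (hx : x = fun i => if i = (⟨n - 1, by omega⟩ : Fin n) then 0 else 1) :
    (1 / n) * ∑ i, x i - (∏ i, x i) ^ ((1 : ℝ) / n) = (n - 1) / n ∧
    ((n : ℝ) - 1) / n = (n : ℝ) *
      ((1 / n) * ∑ i, x i - ((1 / n) * ∑ i, Real.sqrt (x i)) ^ 2) := by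
  subst hx
  set j : Fin n := ⟨n - 1, by omega⟩ with hj
  have hn0 : (n : ℝ) ≠ 0 := by positivity
  have hsum : ∑ i : Fin n, (if i = j then (0:ℝ) else 1) = (n : ℝ) - 1 := by
    have : ∀ i : Fin n, (if i = j then (0:ℝ) else 1) = 1 - (if i = j then 1 else 0) := by
      intro i; split <;> ring
    simp only [this, Finset.sum_sub_distrib, Finset.sum_const, Finset.card_univ,
      Fintype.card_fin, Finset.sum_ite_eq', Finset.mem_univ, if_true]
    ring
  have hprod : ∏ i : Fin n, (if i = j then (0:ℝ) else 1) = 0 :=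
    Finset.prod_eq_zero (Finset.mem_univ j) (by simp)
  have hsqrt : ∑ i : Fin n, Real.sqrt (if i = j then (0:ℝ) else 1) = (n : ℝ) - 1 := by
    have : ∀ i : Fin n, Real.sqrt (if i = j then (0:ℝ) else 1)
        = (if i = j then (0:ℝ) else 1) := by
      intro i; split <;> simp
    simp only [this, hsum]
  have h1n : (1 : ℝ) / n ≠ 0 := by positivity
  constructor
  · rw [hsum, hprod, Real.zero_rpow h1n]
    field_simp
    ring
  · rw [hsum, hsqrt]
    field_simp
    ring
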